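/- Let S and O be finite sets, let ((X_t, Y_t))_{t=1}^{T+1} be an exchangeable family of random elements of S × O, let σ : S × O → ℝ be a conformity score function, and assume the scores σ(X_1, Y_1), …, σ(X_{T+1}, Y_{T+1}) are almost surely pairwise distinct. For i ∈ S define q(i) = (1/(T+1)) · (1 + Σ_{t=1}^{T} 1[σ(X_t, Y_t) ≤ σ(i, Y_{T+1})]), and for α ∈ (0,1) define the conformal prediction set C = { i ∈ S : (T+1) q(i) ≤ ⌈(1−α)(T+1)⌉ }. Then P(X_{T+1} ∈ C) ≥ 1 − α. -/

import Mathlib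

open MeasureTheory Finset
open scoped ENNReal

/-- The conformal quantile `q(i)` of candidate state `i`: the fraction
`(1/(T+1)) (1 + Σ_{t=1}^{T} 1[σ(Xₜ, Yₜ) ≤ σ(i, Y_{T+1})])`, where `(XY t) = (Xₜ, Yₜ)` for
`t = 1, …, T+1` (0-indexed as `Fin (T+1)`) and `σc` is the conformity score function. -/
noncomputable def conformalQuantile {Ω S O : Type*} (T : ℕ)
    (XY : Fin (T + 1) → Ω → S × O) (σc : S × O → ℝ) (i : S) (ω : Ω) : ℝ :=
  (1 + ∑ t : Fin T,
      if σc (XY t.castSucc ω) ≤ σc (i, (XY (Fin.last T) ω).2) then (1 : ℝ) else 0) /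
    ((T : ℝ) + 1)

open scoped Classical in
noncomputable def rnkCP {S O : Type*} {T : ℕ} (σc : S × O → ℝ)
    (v : Fin (T+1) → S × O) (j : Fin (T+1)) : ℕ :=
  (Finset.univ.filter (fun s => σc (v s) ≤ σc (v j))).card

open scoped Classical in
lemma rnk_comp {S O : Type*} {T : ℕ} (σc : S × O → ℝ) (v : Fin (T+1) → S × O)
    (π : Equiv.Perm (Fin (T+1))) (j : Fin (T+1)) :
    rnkCP σc (v ∘ π) j = rnkCP σc v (π j) := by
  unfold rnkCP
  apply Finset.card_bij' (fun s _ => π s) (fun s _ => π.symm s) <;> simp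

open scoped Classical in
lemma rnk_one_le {S O : Type*} {T : ℕ} (σc : S × O → ℝ) (v : Fin (T+1) → S × O)
    (j : Fin (T+1)) : 1 ≤ rnkCP σc v j :=
  Finset.card_pos.2 ⟨j, by simp⟩

open scoped Classical in
lemma rnk_le {S O : Type*} {T : ℕ} (σc : S × O → ℝ) (v : Fin (T+1) → S × O)
    (j : Fin (T+1)) : rnkCP σc v j ≤ T + 1 := by
  have := Finset.card_filter_le Finset.univ (fun s => σc (v s) ≤ σc (v j))
  simpa [rnkCP] using this

open scoped Classical in
lemma rnk_inj {S O : Type*} {T : ℕ} {σc : S × O → ℝ} {v : Fin (T+1) → S × O}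
    (hd : ∀ s t : Fin (T+1), σc (v s) = σc (v t) → s = t) :
    Function.Injective (rnkCP σc v) := by
  have key : ∀ a b : Fin (T+1), σc (v a) < σc (v b) → rnkCP σc v a < rnkCP σc v b := by
    intro a b hab
    apply Finset.card_lt_card
    constructor
    · intro s hs
      simp only [Finset.mem_filter, Finset.mem_univ, true_and] at hs ⊢
      exact hs.trans hab.le
    · intro hsub
      have := hsub (by simp : b ∈ Finset.univ.filter (fun s => σc (v s) ≤ σc (v b)))
      simp only [Finset.mem_filter, Finset.mem_univ, true_and] at this
      exact absurd (lt_of_le_of_lt this hab) (lt_irrefl _)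
  intro a b hab
  rcases lt_trichotomy (σc (v a)) (σc (v b)) with h | h | h
  · exact absurd hab (key a b h).ne
  · exact hd a b h
  · exact absurd hab.symm (key b a h).ne

open scoped Classical in
lemma rnk_card {S O : Type*} {T : ℕ} {σc : S × O → ℝ} {v : Fin (T+1) → S × O}
    (hd : ∀ s t : Fin (T+1), σc (v s) = σc (v t) → s = t) {m : ℕ} (hm : m ≤ T + 1)
    (hm1 : 1 ≤ m) :
    (Finset.univ.filter (fun j => rnkCP σc v j ≤ m)).card = m := by
  have hinj := rnk_inj hd
  have himg : Finset.univ.image (rnkCP σc v) = Finset.Icc 1 (T+1) := by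
    apply Finset.eq_of_subset_of_card_le
    · intro r hr
      simp only [Finset.mem_image, Finset.mem_univ, true_and] at hr
      obtain ⟨j, rfl⟩ := hr
      simp [Finset.mem_Icc, rnk_one_le, rnk_le]
    · rw [Finset.card_image_of_injective _ hinj]
      simp
  have h1 : (Finset.univ.filter (fun j => rnkCP σc v j ≤ m)).card
      = ((Finset.univ.image (rnkCP σc v)).filter (fun r => r ≤ m)).card := by
    rw [Finset.filter_image, Finset.card_image_of_injective _ hinj]
  rw [h1, himg]
  have : (Finset.Icc 1 (T+1)).filter (fun r => r ≤ m) = Finset.Icc 1 m := by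
    ext r; simp only [Finset.mem_filter, Finset.mem_Icc]; omega
  rw [this, Nat.card_Icc]; omega

open scoped Classical in
lemma rnk_sum_real {S O : Type*} {T : ℕ} (σc : S × O → ℝ) (v : Fin (T+1) → S × O) :
    (rnkCP σc v (Fin.last T) : ℝ) =
      1 + ∑ t : Fin T, if σc (v t.castSucc) ≤ σc (v (Fin.last T)) then (1:ℝ) else 0 := by
  have h : (rnkCP σc v (Fin.last T) : ℝ)
      = ∑ s : Fin (T+1), if σc (v s) ≤ σc (v (Fin.last T)) then (1:ℝ) else 0 := by
    rw [Finset.sum_boole]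
    simp [rnkCP]
  rw [h, Fin.sum_univ_castSucc]
  simp [add_comm]


/-- **Coverage guarantee of conformal prediction for exchangeable data.**  If the pairs
`(Xₜ, Yₜ)`, `t = 1, …, T+1`, are exchangeable with a.s. pairwise distinct conformity scores,
then the conformal prediction set `C = {i : (T+1) q(i) ≤ ⌈(1−α)(T+1)⌉}` contains `X_{T+1}`
with probability at least `1 - α`. -/
theorem conformal_prediction_coverage
    {Ω : Type*} [MeasurableSpace Ω] (P : Measure Ω) [IsProbabilityMeasure P]
    {S O : Type*} [Fintype S] [Fintype O]
    [MeasurableSpace S] [MeasurableSingletonClass S]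
    [MeasurableSpace O] [MeasurableSingletonClass O]
    (T : ℕ) (XY : Fin (T + 1) → Ω → S × O) (hXY : ∀ t, Measurable (XY t))
    (hexch : ∀ π : Equiv.Perm (Fin (T + 1)),
      Measure.map (fun ω (t : Fin (T + 1)) => XY (π t) ω) P =
        Measure.map (fun ω (t : Fin (T + 1)) => XY t ω) P)
    (σc : S × O → ℝ)
    (hdist : ∀ᵐ ω ∂P, ∀ s t : Fin (T + 1), σc (XY s ω) = σc (XY t ω) → s = t)
    (α : ℝ) (hα : α ∈ Set.Ioo (0 : ℝ) 1) :
    1 - α ≤ (P {ω | ((T : ℝ) + 1) * conformalQuantile T XY σc ((XY (Fin.last T) ω).1) ω ≤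
        (⌈(1 - α) * ((T : ℝ) + 1)⌉ : ℝ)}).toReal := by
  classical
  obtain ⟨hα0, hα1⟩ := hα
  have hT1 : (0:ℝ) < (T:ℝ) + 1 := by positivity
  have hceil_pos : (0:ℤ) < ⌈(1 - α) * ((T:ℝ) + 1)⌉ := by
    exact Int.ceil_pos.2 (mul_pos (by linarith) hT1)
  set k : ℕ := (⌈(1 - α) * ((T:ℝ) + 1)⌉).toNat with hk
  set m : ℕ := min k (T+1) with hmdef
  have hk1 : 1 ≤ k := by
    rw [hk]; omega
  have hm1 : 1 ≤ m := le_min hk1 (by omega)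
  have hmT : m ≤ T + 1 := min_le_right _ _
  set f : Ω → (Fin (T+1) → S × O) := fun ω t => XY t ω with hf
  have hfm : Measurable f := measurable_pi_lambda _ hXY
  have hmeasB : ∀ B : Set (Fin (T+1) → S × O), MeasurableSet B :=
    fun B => (Set.toFinite B).measurableSet
  set B : Set (Fin (T+1) → S × O) := {v | rnkCP σc v (Fin.last T) ≤ m} with hB
  set E : Fin (T+1) → Set Ω := fun j => f ⁻¹' {v | rnkCP σc v j ≤ m} with hE
  have hEmeas : ∀ j, MeasurableSet (E j) := fun j => hfm (hmeasB _)
  have hEeq : ∀ j, P (E j) = P (f ⁻¹' B) := by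
    intro j
    set π := Equiv.swap (Fin.last T) j with hπ
    have h1 : Measurable (fun ω (t : Fin (T+1)) => XY (π t) ω) :=
      measurable_pi_lambda _ (fun t => hXY (π t))
    have h2 : P ((fun ω (t : Fin (T+1)) => XY (π t) ω) ⁻¹' B) = P (f ⁻¹' B) := by
      rw [← Measure.map_apply h1 (hmeasB B), ← Measure.map_apply hfm (hmeasB B), hexch π]
    rw [← h2]
    congr 1
    ext ω
    simp only [Set.mem_preimage, hB, Set.mem_setOf_eq, hE]
    have hv : (fun t => XY (π t) ω) = (f ω) ∘ π := rfl
    rw [hv, rnk_comp]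
    simp [hπ, Equiv.swap_apply_left]
  have hsum : ((T+1 : ℕ) : ℝ≥0∞) * P (f ⁻¹' B) = ∑ j : Fin (T+1), P (E j) := by
    rw [Finset.sum_congr rfl (fun j _ => hEeq j), Finset.sum_const, Finset.card_univ,
      Fintype.card_fin, nsmul_eq_mul]
  have hlow : ((m : ℕ) : ℝ≥0∞) ≤ ∑ j : Fin (T+1), P (E j) := by
    have h1 : ∀ j, P (E j) = ∫⁻ ω, (E j).indicator 1 ω ∂P :=
      fun j => (lintegral_indicator_one (hEmeas j)).symm
    rw [Finset.sum_congr rfl (fun j _ => h1 j), ← lintegral_finset_sum _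
      (fun j _ => measurable_one.indicator (hEmeas j))]
    have h2 : ∀ᵐ ω ∂P, (fun _ => (m : ℝ≥0∞)) ω ≤ ∑ j : Fin (T+1), (E j).indicator 1 ω := by
      filter_upwards [hdist] with ω hω
      have hcard := rnk_card (v := f ω) (σc := σc) hω hmT hm1
      have hsb : ∑ j : Fin (T+1), (E j).indicator (1 : Ω → ℝ≥0∞) ω
          = ((Finset.univ.filter (fun j => rnkCP σc (f ω) j ≤ m)).card : ℝ≥0∞) := by
        rw [← Finset.sum_boole]
        refine Finset.sum_congr rfl fun j _ => ?_
        by_cases hj : rnkCP σc (f ω) j ≤ m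
        · simp [Set.indicator_apply, hE, hj]
        · simp [Set.indicator_apply, hE, hj]
      simp only [hsb, hcard, le_refl]
    calc ((m : ℕ) : ℝ≥0∞) = ∫⁻ _, (m : ℝ≥0∞) ∂P := by simp
      _ ≤ _ := lintegral_mono_ae h2
  have hkey : ((m : ℕ) : ℝ≥0∞) ≤ ((T+1 : ℕ) : ℝ≥0∞) * P (f ⁻¹' B) := hsum ▸ hlow
  have hne : ((T+1 : ℕ) : ℝ≥0∞) * P (f ⁻¹' B) ≠ ⊤ :=
    ENNReal.mul_ne_top (ENNReal.natCast_ne_top _) (measure_ne_top P _)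
  have hreal : (m : ℝ) ≤ ((T : ℝ) + 1) * (P (f ⁻¹' B)).toReal := by
    have h := ENNReal.toReal_mono hne hkey
    rw [ENNReal.toReal_mul] at h
    simp only [ENNReal.toReal_natCast] at h
    simpa using h
  have hset : {ω | ((T : ℝ) + 1) * conformalQuantile T XY σc ((XY (Fin.last T) ω).1) ω ≤
        (⌈(1 - α) * ((T : ℝ) + 1)⌉ : ℝ)} = f ⁻¹' B := by
    ext ω
    simp only [Set.mem_setOf_eq, Set.mem_preimage, hB]
    have hq : ((T : ℝ) + 1) * conformalQuantile T XY σc ((XY (Fin.last T) ω).1) ω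
        = (rnkCP σc (f ω) (Fin.last T) : ℝ) := by
      rw [rnk_sum_real]
      simp only [conformalQuantile]
      rw [mul_comm, div_mul_cancel₀ _ (ne_of_gt hT1)]
    rw [hq]
    constructor
    · intro h
      have h2 : (rnkCP σc (f ω) (Fin.last T) : ℤ) ≤ ⌈(1 - α) * ((T : ℝ) + 1)⌉ := by
        exact_mod_cast h
      have h3 : rnkCP σc (f ω) (Fin.last T) ≤ k := by omega
      exact le_min h3 (rnk_le _ _ _)
    · intro h
      have h3 : rnkCP σc (f ω) (Fin.last T) ≤ k := le_trans h (min_le_left _ _)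
      have h2 : (rnkCP σc (f ω) (Fin.last T) : ℤ) ≤ ⌈(1 - α) * ((T : ℝ) + 1)⌉ := by omega
      exact_mod_cast h2
  rw [hset]
  have hineq : (1 - α) * ((T : ℝ) + 1) ≤ (m : ℝ) := by
    rcases le_or_gt k (T+1) with h | h
    · rw [hmdef, min_eq_left h]
      have hck : ((k : ℤ) : ℝ) = (⌈(1 - α) * ((T : ℝ) + 1)⌉ : ℝ) := by
        rw [hk, Int.toNat_of_nonneg hceil_pos.le]
      calc (1 - α) * ((T : ℝ) + 1) ≤ (⌈(1 - α) * ((T : ℝ) + 1)⌉ : ℝ) := Int.le_ceil _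
        _ = (k : ℝ) := by exact_mod_cast hck.symm
    · rw [hmdef, min_eq_right h.le]
      push_cast
      nlinarith
  have hfin : (m : ℝ) ≤ ((T : ℝ) + 1) * (P (f ⁻¹' B)).toReal := hreal
  have := hineq.trans hfin
  have h5 : (1 - α) * ((T : ℝ) + 1) ≤ (P (f ⁻¹' B)).toReal * ((T : ℝ) + 1) := by linarith
  exact le_of_mul_le_mul_right h5 hT1
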